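/- Let F be an algebraically closed field and let A, B ∈ GL_n(F) be diagonalizable matrices each with exactly two distinct eigenvalues. Then every composition factor of the subgroup X = ⟨A, B⟩ acting on V = F^n has dimension 1 or 2. -/

import Mathlib

set_option maxHeartbeats 1600000

open Module

theorem key12 {F V : Type*} [Field F] [IsAlgClosed F] [AddCommGroup V] [Module F V]
    [FiniteDimensional F V] [Nontrivial V]
    (a b : Module.End F V) (μ ν : F)
    (ha : a * a = μ • a) (hb : b * b = ν • b)
    (hs : ∀ U : Submodule F V, (∀ v ∈ U, a v ∈ U) → (∀ v ∈ U, b v ∈ U) → U = ⊥ ∨ U = ⊤) :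
    Module.finrank F V ≤ 2 := by
  classical
  set c : Module.End F V := a * b + b * a - ν • a - μ • b with hc
  have haab : a * (a * b) = μ • (a * b) := by rw [← mul_assoc, ha, smul_mul_assoc]
  have hbaa : b * a * a = μ • (b * a) := by rw [mul_assoc, ha, mul_smul_comm]
  have hbba : b * (b * a) = ν • (b * a) := by rw [← mul_assoc, hb, smul_mul_assoc]
  have habb : a * b * b = ν • (a * b) := by rw [mul_assoc, hb, mul_smul_comm]
  have hca : c * a = a * c := by
    simp only [hc, sub_mul, mul_sub, add_mul, mul_add, smul_mul_assoc, mul_smul_comm,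
      mul_assoc, haab, hbaa, ha, smul_smul]
    abel_nf
  have hcb : c * b = b * c := by
    simp only [hc, sub_mul, mul_sub, add_mul, mul_add, smul_mul_assoc, mul_smul_comm,
      mul_assoc, hbba, habb, hb, smul_smul]
    abel_nf
  obtain ⟨lc, hlc⟩ := Module.End.exists_eigenvalue c
  have hE : c.eigenspace lc = ⊤ := by
    have inva : ∀ v ∈ c.eigenspace lc, a v ∈ c.eigenspace lc := by
      intro v hv
      rw [Module.End.mem_eigenspace_iff] at hv ⊢
      calc c (a v) = (c * a) v := rfl
        _ = (a * c) v := by rw [hca]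
        _ = a (c v) := rfl
        _ = lc • a v := by rw [hv, map_smul]
    have invb : ∀ v ∈ c.eigenspace lc, b v ∈ c.eigenspace lc := by
      intro v hv
      rw [Module.End.mem_eigenspace_iff] at hv ⊢
      calc c (b v) = (c * b) v := rfl
        _ = (b * c) v := by rw [hcb]
        _ = b (c v) := rfl
        _ = lc • b v := by rw [hv, map_smul]
    rcases hs (c.eigenspace lc) inva invb with h | h
    · exact absurd h hlc
    · exact h
  have hcv : ∀ v : V, c v = lc • v := by
    intro v
    have : v ∈ c.eigenspace lc := hE ▸ Submodule.mem_top
    rwa [Module.End.mem_eigenspace_iff] at this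
  obtain ⟨ea, hea⟩ := Module.End.exists_eigenvalue a
  obtain ⟨v, hv⟩ := hea.exists_hasEigenvector
  have hav : a v = ea • v := hv.apply_eq_smul
  have hvne : v ≠ 0 := hv.2
  set U : Submodule F V := Submodule.span F {v, b v} with hU
  have hvU : v ∈ U := Submodule.subset_span (by simp)
  have hbvU : b v ∈ U := Submodule.subset_span (by simp)
  have habv : a (b v) = lc • v + (ν * ea) • v + μ • (b v) - ea • (b v) := by
    have h1 : a (b v) + b (a v) - ν • (a v) - μ • (b v) = c v := rfl
    rw [hav, hcv v, map_smul] at h1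
    have h2 : a (b v) = lc • v + ν • ea • v + μ • b v - ea • b v := by
      linear_combination (norm := module) h1
    rw [h2, smul_smul]
  have hUa : ∀ w ∈ U, a w ∈ U := by
    intro w hw
    have : Submodule.map a U ≤ U := by
      rw [hU, Submodule.map_span, Submodule.span_le]
      rintro x ⟨y, hy, rfl⟩
      rcases hy with rfl | rfl
      · rw [hav]; exact U.smul_mem _ hvU
      · rw [habv]
        exact U.sub_mem (U.add_mem (U.add_mem (U.smul_mem _ hvU) (U.smul_mem _ hvU))
          (U.smul_mem _ hbvU)) (U.smul_mem _ hbvU)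
    exact this ⟨w, hw, rfl⟩
  have hUb : ∀ w ∈ U, b w ∈ U := by
    intro w hw
    have : Submodule.map b U ≤ U := by
      rw [hU, Submodule.map_span, Submodule.span_le]
      rintro x ⟨y, hy, rfl⟩
      rcases hy with rfl | rfl
      · exact hbvU
      · have : b (b v) = ν • b v := by
          calc b (b v) = (b * b) v := rfl
            _ = ν • b v := by rw [hb]; rfl
        rw [this]; exact U.smul_mem _ hbvU
    exact this ⟨w, hw, rfl⟩
  rcases hs U hUa hUb with h | h
  · exact absurd (h ▸ hvU) (by simpa using hvne)
  · have h2 : Module.finrank F V = Module.finrank F U := by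
      rw [h, finrank_top]
    rw [h2, hU]
    have h3 : ({v, b v} : Set V) = ↑({v, b v} : Finset V) := by simp
    rw [h3]
    exact (finrank_span_finset_le_card _).trans (by
      apply (Finset.card_insert_le _ _).trans
      simp)

theorem quad12 {F : Type*} [Field F] {n : ℕ} (A P : Matrix (Fin n) (Fin n) F)
    (d : Fin n → F) (hP : IsUnit P.det)
    (hAe : A = P * Matrix.diagonal d * P⁻¹) (h2 : (Set.range d).ncard = 2) :
    ∃ α β : F, α ≠ β ∧ ∀ v : Fin n → F,
      A.mulVec (A.mulVec v) = (α + β) • A.mulVec v - (α * β) • v := by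
  obtain ⟨α, β, hab, hr⟩ := Set.ncard_eq_two.mp h2
  refine ⟨α, β, hab, ?_⟩
  have hd : ∀ i, d i = α ∨ d i = β := by
    intro i
    have : d i ∈ Set.range d := ⟨i, rfl⟩
    rw [hr] at this
    simpa using this
  have hDD : Matrix.diagonal d * Matrix.diagonal d
      = (α + β) • Matrix.diagonal d - (α * β) • 1 := by
    rw [Matrix.diagonal_mul_diagonal]
    ext i j
    by_cases hij : i = j
    · subst hij
      simp only [Matrix.diagonal_apply_eq, Matrix.sub_apply, Matrix.smul_apply,
        Matrix.one_apply_eq, Pi.mul_apply, smul_eq_mul, mul_one]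
      rcases hd i with h | h <;> rw [h] <;> ring
    · simp [Matrix.diagonal_apply_ne _ hij, Matrix.one_apply_ne hij]
  have hPi : P⁻¹ * P = 1 := Matrix.nonsing_inv_mul P hP
  have hPP : P * P⁻¹ = 1 := Matrix.mul_nonsing_inv P hP
  have hAA : A * A = (α + β) • A - (α * β) • 1 := by
    rw [hAe]
    simp only [Matrix.mul_assoc]
    rw [← Matrix.mul_assoc P⁻¹ P, hPi, Matrix.one_mul,
      ← Matrix.mul_assoc (Matrix.diagonal d), hDD]
    simp only [sub_mul, smul_mul_assoc, one_mul, mul_sub, mul_smul_comm, hPP]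
  intro v
  rw [Matrix.mulVec_mulVec, hAA, Matrix.sub_mulVec, Matrix.smul_mulVec,
    Matrix.smul_mulVec, Matrix.one_mulVec]

theorem stmt12 {F : Type*} [Field F] [IsAlgClosed F] {n : ℕ}
    (A B : Matrix (Fin n) (Fin n) F) (hAdet : IsUnit A.det) (hBdet : IsUnit B.det)
    (hA : ∃ (P : Matrix (Fin n) (Fin n) F) (d : Fin n → F), IsUnit P.det ∧
      A = P * Matrix.diagonal d * P⁻¹ ∧ (Set.range d).ncard = 2)
    (hB : ∃ (P : Matrix (Fin n) (Fin n) F) (d : Fin n → F), IsUnit P.det ∧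
      B = P * Matrix.diagonal d * P⁻¹ ∧ (Set.range d).ncard = 2)
    (p q : Submodule F (Fin n → F)) (hpq : p ≤ q) (hne : p ≠ q)
    (hpA : ∀ v ∈ p, A.mulVec v ∈ p) (hpB : ∀ v ∈ p, B.mulVec v ∈ p)
    (hqA : ∀ v ∈ q, A.mulVec v ∈ q) (hqB : ∀ v ∈ q, B.mulVec v ∈ q)
    (hsimple : ∀ r : Submodule F (Fin n → F),
      (∀ v ∈ r, A.mulVec v ∈ r) → (∀ v ∈ r, B.mulVec v ∈ r) →
      p ≤ r → r ≤ q → r = p ∨ r = q) :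
    Module.finrank F q = Module.finrank F p + 1 ∨
    Module.finrank F q = Module.finrank F p + 2 := by
  classical
  obtain ⟨Pa, da, hPa, hAe, h2a⟩ := hA
  obtain ⟨α, β, hab, hvA⟩ := quad12 A Pa da hPa hAe h2a
  obtain ⟨Pb, db, hPb, hBe, h2b⟩ := hB
  obtain ⟨γ, δ, hgd, hvB⟩ := quad12 B Pb db hPb hBe h2b
  set p' : Submodule F q := p.comap q.subtype with hp'
  -- endomorphisms of q
  have hresA : ∀ x ∈ q, A.mulVecLin x ∈ q := fun x hx => by simpa using hqA x hx
  have hresB : ∀ x ∈ q, B.mulVecLin x ∈ q := fun x hx => by simpa using hqB x hx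
  set aq : q →ₗ[F] q := (Matrix.mulVecLin A).restrict hresA with haqdef
  set bq : q →ₗ[F] q := (Matrix.mulVecLin B).restrict hresB with hbqdef
  have haq : ∀ x : q, (aq x : Fin n → F) = A.mulVec (x : Fin n → F) := fun x => by
    simp [haqdef, LinearMap.restrict_apply]
  have hbq : ∀ x : q, (bq x : Fin n → F) = B.mulVec (x : Fin n → F) := fun x => by
    simp [hbqdef, LinearMap.restrict_apply]
  have hleA : p' ≤ p'.comap aq := by
    intro x hx
    simp only [Submodule.mem_comap] at hx ⊢
    rw [hp', Submodule.mem_comap] at hx ⊢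
    simp only [Submodule.subtype_apply] at hx ⊢
    rw [haq]
    exact hpA _ hx
  have hleB : p' ≤ p'.comap bq := by
    intro x hx
    simp only [Submodule.mem_comap] at hx ⊢
    rw [hp', Submodule.mem_comap] at hx ⊢
    simp only [Submodule.subtype_apply] at hx ⊢
    rw [hbq]
    exact hpB _ hx
  set aW : Module.End F (q ⧸ p') := Submodule.mapQ p' p' aq hleA with haWdef
  set bW : Module.End F (q ⧸ p') := Submodule.mapQ p' p' bq hleB with hbWdef
  have haW : ∀ x : q, aW (Submodule.Quotient.mk x) = Submodule.Quotient.mk (aq x) :=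
    fun x => by rw [haWdef, Submodule.mapQ_apply]
  have hbW : ∀ x : q, bW (Submodule.Quotient.mk x) = Submodule.Quotient.mk (bq x) :=
    fun x => by rw [hbWdef, Submodule.mapQ_apply]
  -- nontrivial quotient
  have hp'top : p' ≠ ⊤ := by
    intro h
    apply hne
    refine le_antisymm hpq fun x hx => ?_
    have : (⟨x, hx⟩ : q) ∈ p' := h ▸ Submodule.mem_top
    exact this
  have hnt : Nontrivial (q ⧸ p') :=
    Submodule.Quotient.nontrivial_iff.mpr (lt_top_iff_ne_top.mpr hp'top).ne
  -- shifted endomorphisms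
  set a0 : Module.End F (q ⧸ p') := aW - α • 1 with ha0def
  set b0 : Module.End F (q ⧸ p') := bW - γ • 1 with hb0def
  have ha0mk : ∀ y : q, a0 (Submodule.Quotient.mk y) = Submodule.Quotient.mk (aq y - α • y) := by
    intro y
    rw [ha0def]
    simp only [LinearMap.sub_apply, LinearMap.smul_apply, Module.End.one_apply, haW,
      Submodule.Quotient.mk_sub, Submodule.Quotient.mk_smul]
  have hb0mk : ∀ y : q, b0 (Submodule.Quotient.mk y) = Submodule.Quotient.mk (bq y - γ • y) := by
    intro y
    rw [hb0def]
    simp only [LinearMap.sub_apply, LinearMap.smul_apply, Module.End.one_apply, hbW,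
      Submodule.Quotient.mk_sub, Submodule.Quotient.mk_smul]
  -- quadratic relations
  have hrelA : a0 * a0 = (β - α) • a0 := by
    apply LinearMap.ext
    intro x
    obtain ⟨y, rfl⟩ := Submodule.Quotient.mk_surjective p' x
    rw [Module.End.mul_apply, ha0mk, ha0mk, LinearMap.smul_apply, ha0mk,
      ← Submodule.Quotient.mk_smul]
    congr 1
    apply Subtype.ext
    push_cast [haq, Matrix.mulVec_sub, Matrix.mulVec_smul]
    have := hvA (y : Fin n → F)
    linear_combination (norm := module) this
  have hrelB : b0 * b0 = (δ - γ) • b0 := by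
    apply LinearMap.ext
    intro x
    obtain ⟨y, rfl⟩ := Submodule.Quotient.mk_surjective p' x
    rw [Module.End.mul_apply, hb0mk, hb0mk, LinearMap.smul_apply, hb0mk,
      ← Submodule.Quotient.mk_smul]
    congr 1
    apply Subtype.ext
    push_cast [hbq, Matrix.mulVec_sub, Matrix.mulVec_smul]
    have := hvB (y : Fin n → F)
    linear_combination (norm := module) this
  -- simplicity
  have hsW : ∀ U : Submodule F (q ⧸ p'),
      (∀ w ∈ U, a0 w ∈ U) → (∀ w ∈ U, b0 w ∈ U) → U = ⊥ ∨ U = ⊤ := by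
    intro U hUa hUb
    have hUaW : ∀ w ∈ U, aW w ∈ U := by
      intro w hw
      have h1 : aW w = a0 w + α • w := by rw [ha0def]; simp
      rw [h1]
      exact U.add_mem (hUa w hw) (U.smul_mem _ hw)
    have hUbW : ∀ w ∈ U, bW w ∈ U := by
      intro w hw
      have h1 : bW w = b0 w + γ • w := by rw [hb0def]; simp
      rw [h1]
      exact U.add_mem (hUb w hw) (U.smul_mem _ hw)
    set r : Submodule F (Fin n → F) :=
      Submodule.map q.subtype (Submodule.comap p'.mkQ U) with hrdef
    have hpr : p ≤ r := by
      intro x hx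
      refine ⟨⟨x, hpq hx⟩, ?_, rfl⟩
      have hx' : (⟨x, hpq hx⟩ : q) ∈ p' := hx
      show p'.mkQ ⟨x, hpq hx⟩ ∈ U
      have hz : p'.mkQ ⟨x, hpq hx⟩ = 0 := (Submodule.Quotient.mk_eq_zero p').mpr hx'
      rw [hz]
      exact U.zero_mem
    have hrq : r ≤ q := by
      rintro x ⟨y, _, rfl⟩
      exact y.2
    have hrA : ∀ v ∈ r, A.mulVec v ∈ r := by
      rintro _ ⟨y, hy, rfl⟩
      refine ⟨aq y, ?_, (haq y).symm ▸ rfl⟩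
      have hy' : Submodule.Quotient.mk y ∈ U := hy
      show p'.mkQ (aq y) ∈ U
      have : p'.mkQ (aq y) = aW (Submodule.Quotient.mk y) := (haW y).symm
      rw [this]
      exact hUaW _ hy' 
    have hrB : ∀ v ∈ r, B.mulVec v ∈ r := by
      rintro _ ⟨y, hy, rfl⟩
      refine ⟨bq y, ?_, (hbq y).symm ▸ rfl⟩
      have hy' : Submodule.Quotient.mk y ∈ U := hy
      show p'.mkQ (bq y) ∈ U
      have : p'.mkQ (bq y) = bW (Submodule.Quotient.mk y) := (hbW y).symm
      rw [this]
      exact hUbW _ hy' 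
    rcases hsimple r hrA hrB hpr hrq with h | h
    · left
      rw [eq_bot_iff]
      intro w hw
      obtain ⟨y, hyw⟩ := Submodule.Quotient.mk_surjective p' w
      subst hyw
      have : (y : Fin n → F) ∈ r := ⟨y, by simpa using hw, rfl⟩
      rw [h] at this
      have : y ∈ p' := this
      simpa using (Submodule.Quotient.mk_eq_zero p').mpr this
    · right
      rw [eq_top_iff]
      intro w hwtriv
      clear hwtriv
      obtain ⟨y, hyw⟩ := Submodule.Quotient.mk_surjective p' w
      subst hyw
      have hy : (y : Fin n → F) ∈ r := by rw [h]; exact y.2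
      obtain ⟨z, hz, hzy⟩ := hy
      have : z = y := Subtype.ext hzy
      subst this
      simpa using hz
  -- finish
  have hbound : Module.finrank F (q ⧸ p') ≤ 2 := key12 a0 b0 (β - α) (δ - γ) hrelA hrelB hsW
  have hpos : 0 < Module.finrank F (q ⧸ p') := Module.finrank_pos
  have heq : Module.finrank F (q ⧸ p') + Module.finrank F p' = Module.finrank F q :=
    Submodule.finrank_quotient_add_finrank p'
  have hp'p : Module.finrank F p' = Module.finrank F p :=
    LinearEquiv.finrank_eq (Submodule.comapSubtypeEquivOfLe hpq)
  rw [hp'p] at heq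
  omega
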